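/- Let f : ℝ^n × ℝ^m → ℝ be continuous with x ↦ f(x, ξ̃) convex for every ξ̃ ∈ Ξ, let X ⊆ ℝ^n be closed and convex, let Ξ ⊆ ℝ^m be closed and convex, let ξ̂¹, …, ξ̂ᴺ ∈ Ξ and ε > 0. Then inf_{x ∈ X} sup_{Q ∈ B_ε(P̂_N)} E_Q[f(x, ξ)] = inf_{λ ≥ 0, x ∈ X} { λε² + (1/N) Σ_{k=1}^N sup_{ξ ∈ Ξ} ( f(x, ξ) − λ‖ξ − ξ̂ᵏ‖² ) }, where both sides are taken in the extended reals. -/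

import Mathlib

open scoped BigOperators ENNReal
open MeasureTheory

noncomputable section

/-- `k`-dimensional Euclidean space. -/
abbrev Vec (k : ℕ) := EuclideanSpace ℝ (Fin k)

/-- Expectation E_Q[φ] of a real-valued function, taken in the extended reals
(difference of the lower integrals of the positive and negative parts). -/
def expectEReal {m : ℕ} (Q : Measure (Vec m)) (φ : Vec m → ℝ) : EReal :=
  ((∫⁻ ξ, ENNReal.ofReal (φ ξ) ∂Q : ℝ≥0∞) : EReal)
    - ((∫⁻ ξ, ENNReal.ofReal (-φ ξ) ∂Q : ℝ≥0∞) : EReal)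

/-- M(Ξ): Borel probability measures supported on Ξ with finite second moment. -/
def MXi {m : ℕ} (Ξ : Set (Vec m)) : Set (Measure (Vec m)) :=
  {Q | IsProbabilityMeasure Q ∧ Q Ξᶜ = 0 ∧ (∫⁻ ξ, ENNReal.ofReal (‖ξ‖ ^ 2) ∂Q) < ⊤}

/-- Squared 2-Wasserstein distance: the infimum, over couplings Π of (Q₁, Q₂), of the
transport cost ∫ ‖ξ₁ − ξ₂‖² dΠ. -/
def W2sq {m : ℕ} (Q₁ Q₂ : Measure (Vec m)) : ℝ≥0∞ :=
  ⨅ P ∈ {P : Measure (Vec m × Vec m) |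
      IsProbabilityMeasure P ∧ P.fst = Q₁ ∧ P.snd = Q₂},
    ∫⁻ z, ENNReal.ofReal (‖z.1 - z.2‖ ^ 2) ∂P

/-- 2-Wasserstein ball of radius ε ≥ 0 around Phat, inside M(Ξ):
d_{W₂}(Phat, Q) ≤ ε, equivalently d_{W₂}(Phat, Q)² ≤ ε². -/
def WassBall {m : ℕ} (Ξ : Set (Vec m)) (Phat : Measure (Vec m)) (ε : ℝ) :
    Set (Measure (Vec m)) :=
  {Q ∈ MXi Ξ | W2sq Phat Q ≤ ENNReal.ofReal (ε ^ 2)}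

set_option linter.unusedSectionVars false

section Helpers

lemma ereal_coe_sum {ι : Type*} (s : Finset ι) (f : ι → ℝ) :
    ((∑ i ∈ s, f i : ℝ) : EReal) = ∑ i ∈ s, ((f i : EReal)) := by
  classical
  induction s using Finset.induction with
  | empty => simp
  | @insert a s' h ih => simp [Finset.sum_insert h, EReal.coe_add, ih]

lemma ereal_sub_coe_ennreal {a b : ℝ≥0∞} (ha : a ≠ ⊤) (hb : b ≠ ⊤) :
    (a : EReal) - (b : EReal) = ((a.toReal - b.toReal : ℝ) : EReal) := by
  rw [← ENNReal.ofReal_toReal ha, ← ENNReal.ofReal_toReal hb,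
    EReal.coe_ennreal_ofReal, EReal.coe_ennreal_ofReal,
    max_eq_left ENNReal.toReal_nonneg, max_eq_left ENNReal.toReal_nonneg,
    ENNReal.toReal_ofReal ENNReal.toReal_nonneg, ENNReal.toReal_ofReal ENNReal.toReal_nonneg,
    ← EReal.coe_sub]

lemma ereal_sum_ne_bot {ι : Type*} {s : Finset ι} {f : ι → EReal}
    (h : ∀ i ∈ s, f i ≠ ⊥) : ∑ i ∈ s, f i ≠ ⊥ := by
  classical
  induction s using Finset.induction with
  | empty => simp
  | @insert a s' ha ih =>
      rw [Finset.sum_insert ha, Ne, EReal.add_eq_bot_iff]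
      push_neg
      exact ⟨h a (Finset.mem_insert_self a s'),
        ih fun i hi => h i (Finset.mem_insert_of_mem hi)⟩

lemma ereal_sum_eq_top {ι : Type*} {s : Finset ι} {f : ι → EReal} {i₀ : ι}
    (hi₀ : i₀ ∈ s) (h : f i₀ = ⊤) (hb : ∀ i ∈ s, f i ≠ ⊥) : ∑ i ∈ s, f i = ⊤ := by
  classical
  rw [← Finset.add_sum_erase s f hi₀, h]
  exact EReal.top_add_of_ne_bot
    (ereal_sum_ne_bot fun i hi => hb i (Finset.mem_of_mem_erase hi))

lemma ereal_le_coe_of_forall_gt {x : EReal} {b : ℝ}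
    (h : ∀ b' : ℝ, b < b' → x ≤ (b' : EReal)) : x ≤ (b : EReal) := by
  induction x using EReal.rec with
  | bot => exact bot_le
  | coe r =>
      rw [EReal.coe_le_coe_iff]
      by_contra hc
      push_neg at hc
      have := h ((b + r) / 2) (by linarith)
      rw [EReal.coe_le_coe_iff] at this
      linarith
  | top =>
      exact absurd (h (b + 1) (by linarith)) (EReal.coe_lt_top (b + 1)).not_ge

lemma integrable_dirac' {α : Type*} [MeasurableSpace α] [MeasurableSingletonClass α]
    (f : α → ℝ) (a : α) : Integrable f (Measure.dirac a) := by
  have hae : f =ᵐ[Measure.dirac a] fun _ => f a := by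
    rw [MeasureTheory.ae_dirac_eq]
    exact Filter.eventually_pure.2 rfl
  refine ⟨aestronglyMeasurable_const.congr hae.symm, ?_⟩
  rw [hasFiniteIntegral_iff_norm]
  have : (fun x => ENNReal.ofReal ‖f x‖) =ᵐ[Measure.dirac a] fun _ => ENNReal.ofReal ‖f a‖ :=
    hae.fun_comp fun r => ENNReal.ofReal ‖r‖
  rw [lintegral_congr_ae this, lintegral_dirac]
  exact ENNReal.ofReal_lt_top

variable {α : Type*} [MeasurableSpace α] [MeasurableSingletonClass α] {ι : Type*}

def mixM (s : Finset ι) (w : ι → ℝ) (p : ι → α) : Measure α :=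
  ∑ i ∈ s, ENNReal.ofReal (w i) • Measure.dirac (p i)

lemma mixM_lintegral (s : Finset ι) (w : ι → ℝ) (p : ι → α) (f : α → ℝ≥0∞) :
    ∫⁻ a, f a ∂(mixM s w p) = ∑ i ∈ s, ENNReal.ofReal (w i) * f (p i) := by
  rw [mixM, lintegral_finset_sum_measure]
  congr 1; ext i
  rw [lintegral_smul_measure, lintegral_dirac, smul_eq_mul]

lemma mixM_integral (s : Finset ι) (w : ι → ℝ) (p : ι → α) (hw : ∀ i ∈ s, 0 ≤ w i)
    (f : α → ℝ) :
    ∫ a, f a ∂(mixM s w p) = ∑ i ∈ s, w i * f (p i) := by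
  rw [mixM, integral_finset_sum_measure
    (fun i _ => (integrable_dirac' f (p i)).smul_measure ENNReal.ofReal_ne_top)]
  refine Finset.sum_congr rfl fun i hi => ?_
  rw [integral_smul_measure, integral_dirac, ENNReal.toReal_ofReal (hw i hi), smul_eq_mul]

lemma mixM_apply_zero (s : Finset ι) (w : ι → ℝ) (p : ι → α) {E : Set α}
    (hE : MeasurableSet E) (hp : ∀ i ∈ s, p i ∉ E) : mixM s w p E = 0 := by
  rw [mixM, Measure.finset_sum_apply]
  refine Finset.sum_eq_zero fun i hi => ?_
  rw [Measure.smul_apply, Measure.dirac_apply' _ hE]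
  simp [Set.indicator_of_notMem (hp i hi)]

lemma mixM_isProb (s : Finset ι) {w : ι → ℝ} (p : ι → α)
    (hw0 : ∀ i ∈ s, 0 ≤ w i) (hw1 : ∑ i ∈ s, w i = 1) :
    IsProbabilityMeasure (mixM s w p) := by
  constructor
  rw [mixM, Measure.finset_sum_apply]
  have : ∀ i ∈ s, (ENNReal.ofReal (w i) • Measure.dirac (p i)) Set.univ
      = ENNReal.ofReal (w i) := by
    intro i hi; simp [Measure.smul_apply]
  rw [Finset.sum_congr rfl this, ← ENNReal.ofReal_sum_of_nonneg hw0, hw1,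
    ENNReal.ofReal_one]

lemma mixM_map {β : Type*} [MeasurableSpace β] (s : Finset ι) (w : ι → ℝ) (p : ι → α)
    {φ : α → β} (hφ : Measurable φ) :
    (mixM s w p).map φ = ∑ i ∈ s, ENNReal.ofReal (w i) • Measure.dirac (φ (p i)) := by
  classical
  rw [mixM]
  induction s using Finset.induction with
  | empty => simp [Measure.map_zero]
  | @insert a s' h ih =>
      rw [Finset.sum_insert h, Finset.sum_insert h, Measure.map_add _ _ hφ,
        Measure.map_smul, Measure.map_dirac' hφ, ih]

lemma mixM_expect {m : ℕ} (s : Finset ι) {w : ι → ℝ} (p : ι → Vec m)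
    (hw0 : ∀ i ∈ s, 0 ≤ w i) (g : Vec m → ℝ) :
    expectEReal (mixM s w p) g = ((∑ i ∈ s, w i * g (p i) : ℝ) : EReal) := by
  have key : ∀ h : Vec m → ℝ, (∫⁻ a, ENNReal.ofReal (h a) ∂(mixM s w p))
      = ENNReal.ofReal (∑ i ∈ s, w i * max (h (p i)) 0) := by
    intro h
    rw [mixM_lintegral, ENNReal.ofReal_sum_of_nonneg
      (fun i hi => mul_nonneg (hw0 i hi) (le_max_right _ _))]
    refine Finset.sum_congr rfl fun i hi => ?_
    rw [ENNReal.ofReal_mul (hw0 i hi)]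
    rcases le_total (h (p i)) 0 with hle | hle
    · rw [max_eq_right hle, ENNReal.ofReal_of_nonpos hle, ENNReal.ofReal_zero]
    · rw [max_eq_left hle]
  rw [expectEReal, key, key, EReal.coe_ennreal_ofReal, EReal.coe_ennreal_ofReal]
  have hA : (0:ℝ) ≤ ∑ i ∈ s, w i * max (g (p i)) 0 :=
    Finset.sum_nonneg fun i hi => mul_nonneg (hw0 i hi) (le_max_right _ _)
  have hB : (0:ℝ) ≤ ∑ i ∈ s, w i * max (-g (p i)) 0 :=
    Finset.sum_nonneg fun i hi => mul_nonneg (hw0 i hi) (le_max_right _ _)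
  rw [max_eq_left hA, max_eq_left hB, ← EReal.coe_sub, ← Finset.sum_sub_distrib]
  congr 1
  refine Finset.sum_congr rfl fun i hi => ?_
  rw [← mul_sub]
  congr 1
  rcases le_total (g (p i)) 0 with hle | hle
  · rw [max_eq_right hle, max_eq_left (neg_nonneg.2 hle)]; ring
  · rw [max_eq_left hle, max_eq_right (neg_nonpos.2 hle)]; ring

lemma phat_eq {m N : ℕ} (hN : 0 < N) (ξhat : Fin N → Vec m) :
    (N : ℝ≥0∞)⁻¹ • ∑ k : Fin N, Measure.dirac (ξhat k)
      = mixM Finset.univ (fun _ => 1 / (N : ℝ)) ξhat := by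
  rw [mixM, Finset.smul_sum]
  congr 1; ext k
  congr 1
  rw [one_div, ENNReal.ofReal_inv_of_pos (by exact_mod_cast hN), ENNReal.ofReal_natCast]

end Helpers

lemma weak_dual {m N : ℕ} (hN : 0 < N)
    (Ξ : Set (Vec m)) (hΞclosed : IsClosed Ξ)
    (ξhat : Fin N → Vec m) (hξhat : ∀ k, ξhat k ∈ Ξ)
    (ε : ℝ) (hε : 0 < ε) (g : Vec m → ℝ) (hg : Continuous g)
    (Q : Measure (Vec m))
    (hQ : Q ∈ WassBall Ξ ((N : ℝ≥0∞)⁻¹ • ∑ k : Fin N, Measure.dirac (ξhat k)) ε)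
    (lam : ℝ) (hlam : 0 ≤ lam) :
    expectEReal Q g ≤ ((lam * ε ^ 2 : ℝ) : EReal)
      + ((1 / (N : ℝ) : ℝ) : EReal) *
        ∑ k : Fin N, ⨆ ξ ∈ Ξ, ((g ξ - lam * ‖ξ - ξhat k‖ ^ 2 : ℝ) : EReal) := by
  classical
  obtain ⟨⟨hprob, hsupp, hmom⟩, hW⟩ := hQ
  set Phat := (N : ℝ≥0∞)⁻¹ • ∑ k : Fin N, Measure.dirac (ξhat k) with hPhat
  set sE : Fin N → EReal :=
    fun k => ⨆ ξ ∈ Ξ, ((g ξ - lam * ‖ξ - ξhat k‖ ^ 2 : ℝ) : EReal) with hsE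
  have hs_lb : ∀ k, ((g (ξhat k) : ℝ) : EReal) ≤ sE k := by
    intro k
    have h1 : ((g (ξhat k) - lam * ‖ξhat k - ξhat k‖ ^ 2 : ℝ) : EReal) ≤ sE k :=
      le_iSup₂_of_le (ξhat k) (hξhat k) le_rfl
    simpa using h1
  have hs_nb : ∀ k, sE k ≠ ⊥ := fun k hb =>
    (EReal.coe_ne_bot (g (ξhat k))) (le_bot_iff.1 (hb ▸ hs_lb k))
  by_cases hstop : ∃ k, sE k = ⊤
  · obtain ⟨k₀, hk₀⟩ := hstop
    have hsum : ∑ k : Fin N, sE k = ⊤ :=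
      ereal_sum_eq_top (Finset.mem_univ k₀) hk₀ (fun i _ => hs_nb i)
    rw [hsum, EReal.coe_mul_top_of_pos (by positivity),
      EReal.add_top_of_ne_bot (EReal.coe_ne_bot _)]
    exact le_top
  push_neg at hstop
  set sval : Fin N → ℝ := fun k => (sE k).toReal with hsvaldef
  have hsE_eq : ∀ k, sE k = ((sval k : ℝ) : EReal) :=
    fun k => (EReal.coe_toReal (hstop k) (hs_nb k)).symm
  have key : ∀ k, ∀ ξ ∈ Ξ, g ξ - lam * ‖ξ - ξhat k‖ ^ 2 ≤ sval k := by
    intro k ξ hξ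
    have h1 : ((g ξ - lam * ‖ξ - ξhat k‖ ^ 2 : ℝ) : EReal) ≤ sE k :=
      le_iSup₂_of_le ξ hξ le_rfl
    rwa [hsE_eq k, EReal.coe_le_coe_iff] at h1
  set sel : Vec m → Finset (Fin N) :=
    fun v => Finset.univ.filter (fun k => ξhat k = v) with hseldef
  set u : Vec m → ℝ := fun v =>
    if h : (sel v).Nonempty then (sel v).inf' h sval else 0 with hudef
  have hu_meas : Measurable u := by
    letI : MeasurableSpace (Finset (Fin N)) := ⊤
    have hsel : Measurable sel := by
      apply measurable_to_countable'
      intro S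
      have hpre : sel ⁻¹' {S} = ⋂ k : Fin N,
          (if k ∈ S then ({ξhat k} : Set (Vec m)) else ({ξhat k} : Set (Vec m))ᶜ) := by
        ext v
        simp only [Set.mem_preimage, Set.mem_singleton_iff, Set.mem_iInter, hseldef,
          Finset.ext_iff, Finset.mem_filter, Finset.mem_univ, true_and]
        constructor
        · intro h k
          by_cases hk : k ∈ S
          · simp only [hk, if_true, Set.mem_singleton_iff]
            exact ((h k).2 hk).symm
          · simp only [hk, if_false, Set.mem_compl_iff, Set.mem_singleton_iff]
            intro hv
            exact hk ((h k).1 hv.symm)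
        · intro h k
          by_cases hk : k ∈ S
          · have := h k
            simp only [hk, if_true, Set.mem_singleton_iff] at this
            exact ⟨fun _ => hk, fun _ => this.symm⟩
          · have := h k
            simp only [hk, if_false, Set.mem_compl_iff, Set.mem_singleton_iff] at this
            exact ⟨fun hv => absurd hv.symm this, fun hS => absurd hS hk⟩
      rw [hpre]
      exact MeasurableSet.iInter fun k => by
        by_cases hk : k ∈ S
        · simpa [hk] using measurableSet_singleton (ξhat k)
        · simpa [hk] using (measurableSet_singleton (ξhat k)).compl
    exact (measurable_from_top
      (f := fun S : Finset (Fin N) => if h : S.Nonempty then S.inf' h sval else 0)).comp hsel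
  set B : ℝ := ∑ k : Fin N, |sval k| with hBdef
  have hB0 : 0 ≤ B := Finset.sum_nonneg fun i _ => abs_nonneg _
  have hu_bdd : ∀ v, |u v| ≤ B := by
    intro v
    rw [hudef]
    dsimp only
    split_ifs with h
    · obtain ⟨k₀, hk₀, hval⟩ := Finset.exists_mem_eq_inf' h sval
      rw [hval]
      exact Finset.single_le_sum (fun i _ => abs_nonneg (sval i)) (Finset.mem_univ k₀)
    · simpa using hB0
  have hu_pt : ∀ k, u (ξhat k) ≤ sval k := by
    intro k
    have hk : k ∈ sel (ξhat k) := by simp [hseldef]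
    have hne : (sel (ξhat k)).Nonempty := ⟨k, hk⟩
    rw [hudef]
    dsimp only
    rw [dif_pos hne]
    exact Finset.inf'_le sval hk
  have main : ∀ δ : ℝ, 0 < δ →
      expectEReal Q g
        ≤ ((lam * ε ^ 2 + (1 / (N:ℝ)) * ∑ k, sval k + lam * δ : ℝ) : EReal) := by
    intro δ hδ
    have hW2 : W2sq Phat Q < ENNReal.ofReal (ε ^ 2 + δ) :=
      lt_of_le_of_lt hW ((ENNReal.ofReal_lt_ofReal_iff (by positivity)).2 (by linarith))
    rw [W2sq, iInf_lt_iff] at hW2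
    obtain ⟨Cpl, hCpl2⟩ := hW2
    rw [iInf_lt_iff] at hCpl2
    obtain ⟨⟨hCplprob, hfst, hsnd⟩, hcost⟩ := hCpl2
    have hFmeas : MeasurableSet (Set.range ξhat) := (Set.finite_range ξhat).measurableSet
    have hae1 : ∀ᵐ z ∂Cpl, z.1 ∈ Set.range ξhat := by
      rw [ae_iff]
      have hset : {z : Vec m × Vec m | ¬ z.1 ∈ Set.range ξhat}
          = Prod.fst ⁻¹' (Set.range ξhat)ᶜ := rfl
      rw [hset, ← Measure.fst_apply hFmeas.compl, hfst, hPhat, phat_eq hN ξhat]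
      refine mixM_apply_zero _ _ _ hFmeas.compl ?_
      intro k _ hk
      exact hk (Set.mem_range_self k)
    have hΞmeas : MeasurableSet Ξ := hΞclosed.measurableSet
    have hae2 : ∀ᵐ z ∂Cpl, z.2 ∈ Ξ := by
      rw [ae_iff]
      have hset : {z : Vec m × Vec m | ¬ z.2 ∈ Ξ} = Prod.snd ⁻¹' Ξᶜ := rfl
      rw [hset, ← Measure.snd_apply hΞmeas.compl, hsnd]
      exact hsupp
    have hae : ∀ᵐ z ∂Cpl, g z.2 ≤ u z.1 + lam * ‖z.1 - z.2‖ ^ 2 := by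
      filter_upwards [hae1, hae2] with z h1 h2
      obtain ⟨k₁, hk₁⟩ := h1
      have hne : (sel z.1).Nonempty := ⟨k₁, by simp [hseldef, hk₁]⟩
      obtain ⟨k₀, hk₀, hval⟩ := Finset.exists_mem_eq_inf' hne sval
      have hueq : u z.1 = sval k₀ := by
        rw [hudef]; dsimp only; rw [dif_pos hne]; exact hval
      have hξk₀ : ξhat k₀ = z.1 := by
        have := hk₀
        simp only [hseldef, Finset.mem_filter, Finset.mem_univ, true_and] at this
        exact this
      have hkey := key k₀ z.2 h2
      rw [hueq, ← hξk₀, norm_sub_rev]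
      linarith
    have hcost_cont : Continuous (fun z : Vec m × Vec m => ‖z.1 - z.2‖ ^ 2) :=
      ((continuous_fst.sub continuous_snd).norm.pow 2)
    have hcost_int : Integrable (fun z : Vec m × Vec m => ‖z.1 - z.2‖ ^ 2) Cpl := by
      refine ⟨hcost_cont.aestronglyMeasurable, ?_⟩
      rw [hasFiniteIntegral_iff_ofReal (ae_of_all _ fun z => by positivity)]
      exact lt_trans hcost ENNReal.ofReal_lt_top
    have hufst_int : Integrable (fun z : Vec m × Vec m => u z.1) Cpl := by
      refine Integrable.mono' (integrable_const B)
        ((hu_meas.comp measurable_fst).aestronglyMeasurable) (ae_of_all _ fun z => ?_)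
      exact hu_bdd z.1
    have hb_int : Integrable (fun z : Vec m × Vec m => u z.1 + lam * ‖z.1 - z.2‖ ^ 2) Cpl :=
      hufst_int.add (hcost_int.const_mul lam)
    have hgm : Measurable g := hg.measurable
    have hpos_le : (∫⁻ z, ENNReal.ofReal (g z.2) ∂Cpl)
        ≤ ∫⁻ z, ENNReal.ofReal (u z.1 + lam * ‖z.1 - z.2‖ ^ 2) ∂Cpl :=
      lintegral_mono_ae (hae.mono fun z hz => ENNReal.ofReal_le_ofReal hz)
    have hb_fin : (∫⁻ z, ENNReal.ofReal (u z.1 + lam * ‖z.1 - z.2‖ ^ 2) ∂Cpl) < ⊤ :=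
      hb_int.lintegral_lt_top
    have hpos_fin : (∫⁻ z, ENNReal.ofReal (g z.2) ∂Cpl) ≠ ⊤ :=
      (lt_of_le_of_lt hpos_le hb_fin).ne
    have hQmap : Q = Cpl.map Prod.snd := hsnd.symm
    have hlmap : ∀ φ : Vec m → ℝ, Measurable φ →
        (∫⁻ ξ, ENNReal.ofReal (φ ξ) ∂Q) = ∫⁻ z, ENNReal.ofReal (φ z.2) ∂Cpl := by
      intro φ hφ
      rw [hQmap, lintegral_map hφ.ennreal_ofReal measurable_snd]
    have hexp : expectEReal Q g
        = ((∫⁻ z, ENNReal.ofReal (g z.2) ∂Cpl : ℝ≥0∞) : EReal)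
          - ((∫⁻ z, ENNReal.ofReal (-g z.2) ∂Cpl : ℝ≥0∞) : EReal) := by
      rw [expectEReal, hlmap g hgm, hlmap (fun ξ => -g ξ) hgm.neg]
    by_cases hneg : (∫⁻ z, ENNReal.ofReal (-g z.2) ∂Cpl) = ⊤
    · rw [hexp, hneg]
      simp only [EReal.coe_ennreal_top, EReal.sub_top]
      exact bot_le
    have hgs_int : Integrable (fun z : Vec m × Vec m => g z.2) Cpl := by
      refine ⟨(hgm.comp measurable_snd).aestronglyMeasurable, ?_⟩
      rw [hasFiniteIntegral_iff_norm]
      calc ∫⁻ z, ENNReal.ofReal ‖g z.2‖ ∂Cpl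
          ≤ ∫⁻ z, (ENNReal.ofReal (g z.2) + ENNReal.ofReal (-g z.2)) ∂Cpl := by
            refine lintegral_mono fun z => ?_
            rcases le_total (g z.2) 0 with h | h
            · rw [Real.norm_eq_abs, abs_of_nonpos h]; exact le_add_self
            · rw [Real.norm_eq_abs, abs_of_nonneg h]; exact le_self_add
        _ < ⊤ := by
            have hmeas2 : Measurable fun z : Vec m × Vec m => ENNReal.ofReal (g z.2) :=
              (hgm.comp measurable_snd).ennreal_ofReal
            rw [lintegral_add_left hmeas2]
            exact ENNReal.add_lt_top.2 ⟨hpos_fin.lt_top, Ne.lt_top hneg⟩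
    have hexp_eq : expectEReal Q g = ((∫ z, g z.2 ∂Cpl : ℝ) : EReal) := by
      rw [hexp, ereal_sub_coe_ennreal hpos_fin hneg,
        integral_eq_lintegral_pos_part_sub_lintegral_neg_part hgs_int]
    rw [hexp_eq, EReal.coe_le_coe_iff]
    have h1 : ∫ z, g z.2 ∂Cpl ≤ ∫ z, (u z.1 + lam * ‖z.1 - z.2‖ ^ 2) ∂Cpl :=
      integral_mono_ae hgs_int hb_int hae
    have h2 : ∫ z, (u z.1 + lam * ‖z.1 - z.2‖ ^ 2) ∂Cpl
        = ∫ z, u z.1 ∂Cpl + lam * ∫ z, ‖z.1 - z.2‖ ^ 2 ∂Cpl := by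
      rw [integral_add hufst_int (hcost_int.const_mul lam), integral_const_mul lam fun z : Vec m × Vec m => ‖z.1 - z.2‖ ^ 2]
    have h3 : ∫ z, u z.1 ∂Cpl ≤ (1 / (N:ℝ)) * ∑ k, sval k := by
      have hmapint : ∫ z, u z.1 ∂Cpl = ∫ v, u v ∂Phat := by
        rw [← hfst]
        exact (integral_map measurable_fst.aemeasurable hu_meas.aestronglyMeasurable).symm
      rw [hmapint, hPhat, phat_eq hN ξhat,
        mixM_integral _ _ _ (fun i _ => by positivity), Finset.mul_sum]
      exact Finset.sum_le_sum fun k _ =>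
        mul_le_mul_of_nonneg_left (hu_pt k) (by positivity)
    have h4 : ∫ z, ‖z.1 - z.2‖ ^ 2 ∂Cpl ≤ ε ^ 2 + δ := by
      rw [integral_eq_lintegral_of_nonneg_ae (ae_of_all _ fun z => by positivity)
        hcost_cont.aestronglyMeasurable]
      exact ENNReal.toReal_le_of_le_ofReal (by positivity) hcost.le
    have h5 : lam * ∫ z, ‖z.1 - z.2‖ ^ 2 ∂Cpl ≤ lam * (ε ^ 2 + δ) :=
      mul_le_mul_of_nonneg_left h4 hlam
    linarith
  have hRHS : ((lam * ε ^ 2 : ℝ) : EReal)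
        + ((1 / (N : ℝ) : ℝ) : EReal) * ∑ k : Fin N, sE k
      = ((lam * ε ^ 2 + (1 / (N:ℝ)) * ∑ k, sval k : ℝ) : EReal) := by
    have hsum : ∑ k : Fin N, sE k = ((∑ k, sval k : ℝ) : EReal) := by
      rw [ereal_coe_sum]
      exact Finset.sum_congr rfl fun k _ => hsE_eq k
    rw [hsum, ← EReal.coe_mul, ← EReal.coe_add]
  have hfinal : expectEReal Q g
      ≤ ((lam * ε ^ 2 + (1 / (N:ℝ)) * ∑ k, sval k : ℝ) : EReal) := by
    apply ereal_le_coe_of_forall_gt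
    intro b' hb'
    rcases eq_or_lt_of_le hlam with h0 | h0
    · refine le_trans (main 1 one_pos) (EReal.coe_le_coe_iff.2 ?_)
      nlinarith
    · have hδpos : 0 < (b' - (lam * ε ^ 2 + (1 / (N:ℝ)) * ∑ k, sval k)) / lam :=
        div_pos (by linarith) h0
      refine le_trans (main _ hδpos) (EReal.coe_le_coe_iff.2 ?_)
      rw [mul_div_cancel₀ _ (ne_of_gt h0)]
      linarith
  exact le_trans hfinal (le_of_eq hRHS.symm)

lemma plane_duality {T : Set (ℝ × ℝ)} {e v a₀ : ℝ} (he : 0 < e)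
    (h0 : (0, a₀) ∈ T)
    (hv : ∀ p ∈ convexHull ℝ T, p.1 ≤ e → p.2 ≤ v) :
    ∃ lam : ℝ, 0 ≤ lam ∧ ∀ p ∈ T, p.2 - lam * p.1 ≤ v - lam * e := by
  set Ω : Set (ℝ × ℝ) := {p | p.1 < e ∧ v < p.2} with hΩdef
  have hopen : IsOpen Ω :=
    (isOpen_lt continuous_fst continuous_const).inter
      (isOpen_lt continuous_const continuous_snd)
  have hconv : Convex ℝ Ω := by
    exact (convex_halfSpace_lt (IsLinearMap.mk (fun a b => rfl) (fun c a => rfl)) e).inter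
      (convex_halfSpace_gt (IsLinearMap.mk (fun a b => rfl) (fun c a => rfl)) v)
  have hdisj : Disjoint Ω (convexHull ℝ T) := by
    rw [Set.disjoint_left]
    rintro p ⟨h1, h2⟩ hT
    exact absurd (hv p hT h1.le) (not_le.2 h2)
  obtain ⟨f, u, hfΩ, hfT⟩ :=
    geometric_hahn_banach_open hconv hopen (convex_convexHull ℝ T) hdisj
  set α := f (1, 0) with hα
  set β := f (0, 1) with hβ
  have hlin : ∀ c a : ℝ, f (c, a) = c * α + a * β := by
    intro c a
    have h : (c, a) = c • ((1:ℝ), (0:ℝ)) + a • ((0:ℝ), (1:ℝ)) := by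
      simp [Prod.ext_iff]
    rw [h, map_add, f.map_smul, f.map_smul, smul_eq_mul, smul_eq_mul]
  have hT' : ∀ p ∈ T, u ≤ p.1 * α + p.2 * β := by
    intro p hp
    have := hfT p (subset_convexHull ℝ T hp)
    rwa [← Prod.mk.eta (p := p), hlin] at this
  have hΩ' : ∀ c a : ℝ, c < e → v < a → c * α + a * β < u := by
    intro c a h1 h2
    have := hfΩ (c, a) ⟨h1, h2⟩
    rwa [hlin] at this
  have hαpos : 0 ≤ α := by
    by_contra hcon
    push_neg at hcon
    set c := min (e - 1) ((u - (v + 1) * β) / α) with hc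
    have h1 : c < e := lt_of_le_of_lt (min_le_left _ _) (by linarith)
    have h2 : c ≤ (u - (v + 1) * β) / α := min_le_right _ _
    have h3 : c * α ≥ u - (v + 1) * β := by
      have := mul_le_mul_of_nonpos_right h2 hcon.le
      rwa [div_mul_cancel₀ _ (ne_of_lt hcon)] at this
    have := hΩ' c (v + 1) h1 (by linarith)
    linarith
  have hβneg : β ≤ 0 := by
    by_contra hcon
    push_neg at hcon
    set a := max (v + 1) ((u - (e - 1) * α) / β) with ha
    have h1 : v < a := lt_of_lt_of_le (by linarith) (le_max_left _ _)
    have h2 : (u - (e - 1) * α) / β ≤ a := le_max_right _ _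
    have h3 : a * β ≥ u - (e - 1) * α := by
      have := mul_le_mul_of_nonneg_right h2 hcon.le
      rwa [div_mul_cancel₀ _ (ne_of_gt hcon)] at this
    have := hΩ' (e - 1) a (by linarith) h1
    linarith
  have hev : α * e + β * v ≤ u := by
    by_contra hcon
    push_neg at hcon
    have hkey : ∀ s : ℝ, 0 < s → (e - s) * α + (v + s) * β < u := fun s hs =>
      hΩ' _ _ (by linarith) (by linarith)
    rcases eq_or_lt_of_le (sub_nonneg.2 (le_trans hβneg hαpos) : (0:ℝ) ≤ α - β) with h | h
    · have := hkey 1 one_pos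
      nlinarith
    · set s := (α * e + β * v - u) / (2 * (α - β)) with hs
      have hspos : 0 < s := div_pos (by linarith) (by linarith)
      have hmul : s * (α - β) = (α * e + β * v - u) / 2 := by
        rw [hs]; field_simp
      have hk := hkey s hspos
      have hexp : (e - s) * α + (v + s) * β = α * e + β * v - s * (α - β) := by ring
      rw [hexp, hmul] at hk
      linarith
  have hβlt : β < 0 := by
    rcases eq_or_lt_of_le hβneg with h | h
    · exfalso
      have hu0 : u ≤ 0 := by
        have h2 := hT' _ h0
        rw [h] at h2
        simpa using h2
      have h3 := hΩ' (e / 2) (v + 1) (by linarith) (by linarith)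
      rw [h] at h3
      nlinarith [mul_nonneg hαpos (le_of_lt (half_pos he))]
    · exact h
  refine ⟨α / (-β), div_nonneg hαpos (by linarith), ?_⟩
  intro p hp
  have hkey := hT' p hp
  have hβ' : (0:ℝ) < -β := by linarith
  have hβne : (-β) ≠ 0 := ne_of_gt hβ'
  have hL : α / -β * -β = α := div_mul_cancel₀ α hβne
  by_contra hcon
  push_neg at hcon
  have h2 := mul_lt_mul_of_pos_right hcon hβ'
  have e1 : (v - α / -β * e) * -β = v * -β - α * e := by linear_combination (-e) * hL
  have e2 : (p.2 - α / -β * p.1) * -β = p.2 * -β - α * p.1 := by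
    linear_combination (-p.1) * hL
  rw [e1, e2] at h2
  linarith

def Tset {m N : ℕ} (Ξ : Set (Vec m)) (ξhat : Fin N → Vec m) (g : Vec m → ℝ) : Set (ℝ × ℝ) :=
  {p | ∃ ζ : Fin N → Vec m, (∀ k, ζ k ∈ Ξ) ∧
    p.1 = (1 / (N:ℝ)) * ∑ k, ‖ζ k - ξhat k‖ ^ 2 ∧
    p.2 = (1 / (N:ℝ)) * ∑ k, g (ζ k)}

lemma realize {m N : ℕ} (hN : 0 < N)
    (Ξ : Set (Vec m)) (hΞclosed : IsClosed Ξ)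
    (ξhat : Fin N → Vec m) (hξhat : ∀ k, ξhat k ∈ Ξ)
    (ε : ℝ) (hε : 0 < ε) (g : Vec m → ℝ)
    {c a : ℝ} (hmem : (c, a) ∈ convexHull ℝ (Tset Ξ ξhat g)) (hc : c ≤ ε ^ 2) :
    ((a : ℝ) : EReal)
      ≤ ⨆ Q ∈ WassBall Ξ ((N : ℝ≥0∞)⁻¹ • ∑ k : Fin N, Measure.dirac (ξhat k)) ε,
          expectEReal Q g := by
  classical
  have hNR : (0:ℝ) < N := by exact_mod_cast hN
  rw [convexHull_eq] at hmem
  obtain ⟨ι, t, w, z, hw0, hw1, hz, hcm⟩ := hmem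
  rw [Finset.centerMass_eq_of_sum_1 _ _ hw1] at hcm
  choose! ζ hζΞ hzC hzA using hz
  set S : Finset (ι × Fin N) := t ×ˢ (Finset.univ : Finset (Fin N)) with hS
  set W : ι × Fin N → ℝ := fun ik => w ik.1 * (1 / (N:ℝ)) with hW
  have hW0 : ∀ ik ∈ S, 0 ≤ W ik := by
    intro ik hik
    rw [hS, Finset.mem_product] at hik
    exact mul_nonneg (hw0 _ hik.1) (by positivity)
  have hWsum : ∑ ik ∈ S, W ik = 1 := by
    rw [hS, Finset.sum_product]
    have h1 : ∀ i ∈ t, ∑ _k : Fin N, W (i, _k) = w i := by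
      intro i _
      have h2 : ∀ _k : Fin N, W (i, _k) = w i * (1 / (N:ℝ)) := fun _ => rfl
      rw [Finset.sum_congr rfl fun k _ => h2 k, Finset.sum_const, Finset.card_univ,
        Fintype.card_fin, nsmul_eq_mul]
      field_simp
    rw [Finset.sum_congr rfl h1, hw1]
  have hsum1 : ∀ F : ι → Fin N → ℝ,
      ∑ ik ∈ S, W ik * F ik.1 ik.2 = ∑ i ∈ t, w i * ((1/(N:ℝ)) * ∑ k, F i k) := by
    intro F
    rw [hS, Finset.sum_product]
    refine Finset.sum_congr rfl fun i _ => ?_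
    rw [Finset.mul_sum, Finset.mul_sum]
    exact Finset.sum_congr rfl fun k _ => by rw [hW]; ring
  have hofsum : ∀ G : ι × Fin N → ℝ, (∀ ik ∈ S, 0 ≤ G ik) →
      ∑ ik ∈ S, ENNReal.ofReal (W ik) * ENNReal.ofReal (G ik)
        = ENNReal.ofReal (∑ ik ∈ S, W ik * G ik) := by
    intro G hG
    rw [ENNReal.ofReal_sum_of_nonneg (fun ik hik => mul_nonneg (hW0 ik hik) (hG ik hik))]
    exact Finset.sum_congr rfl fun ik hik => (ENNReal.ofReal_mul (hW0 ik hik)).symm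
  set Q := mixM S W (fun ik => ζ ik.1 ik.2) with hQ
  set Cpl := mixM S W (fun ik => (ξhat ik.2, ζ ik.1 ik.2)) with hCpl
  have hQprob : IsProbabilityMeasure Q := mixM_isProb S _ hW0 hWsum
  have hCplprob : IsProbabilityMeasure Cpl := mixM_isProb S _ hW0 hWsum
  have hmemS : ∀ ik ∈ S, ik.1 ∈ t := by
    intro ik hik; rw [hS, Finset.mem_product] at hik; exact hik.1
  have hQsupp : Q Ξᶜ = 0 := by
    refine mixM_apply_zero S W _ hΞclosed.measurableSet.compl fun ik hik h => ?_
    exact h (hζΞ ik.1 (hmemS ik hik) ik.2)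
  have hQmom : (∫⁻ ξ, ENNReal.ofReal (‖ξ‖ ^ 2) ∂Q) < ⊤ := by
    rw [hQ, mixM_lintegral]
    refine ENNReal.sum_lt_top.2 fun ik _ => ?_
    exact ENNReal.mul_lt_top ENNReal.ofReal_lt_top ENNReal.ofReal_lt_top
  have hfst : Cpl.fst = (N : ℝ≥0∞)⁻¹ • ∑ k : Fin N, Measure.dirac (ξhat k) := by
    have h1 : Cpl.fst = Cpl.map Prod.fst := rfl
    rw [h1, hCpl, mixM_map S W _ measurable_fst, phat_eq hN ξhat, mixM]
    rw [hS, Finset.sum_product]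
    rw [Finset.sum_comm]
    refine Finset.sum_congr rfl fun k _ => ?_
    have hd : ∀ i ∈ t, ENNReal.ofReal (W (i, k))
        • Measure.dirac (Prod.fst (ξhat (i, k).2, ζ (i, k).1 (i, k).2))
        = ENNReal.ofReal (w i * (1/(N:ℝ))) • Measure.dirac (ξhat k) := fun i _ => rfl
    rw [Finset.sum_congr rfl hd, ← Finset.sum_smul]
    congr 1
    rw [← ENNReal.ofReal_sum_of_nonneg
      (fun i hi => mul_nonneg (hw0 i hi) (by positivity)), ← Finset.sum_mul, hw1, one_mul]
  have hsnd : Cpl.snd = Q := by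
    have h1 : Cpl.snd = Cpl.map Prod.snd := rfl
    rw [h1, hCpl, mixM_map S W _ measurable_snd, hQ, mixM]
  have hcval : ∑ ik ∈ S, W ik * ‖ξhat ik.2 - ζ ik.1 ik.2‖ ^ 2 = c := by
    rw [hsum1 (fun i k => ‖ξhat k - ζ i k‖ ^ 2)]
    have h2 : ∀ i ∈ t, w i * ((1/(N:ℝ)) * ∑ k, ‖ξhat k - ζ i k‖ ^ 2) = w i * (z i).1 := by
      intro i hi
      rw [hzC i hi]
      congr 2
      exact Finset.sum_congr rfl fun k _ => by rw [norm_sub_rev]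
    rw [Finset.sum_congr rfl h2]
    have := congrArg Prod.fst hcm
    simpa [Prod.fst_sum] using this
  have haval : ∑ ik ∈ S, W ik * g (ζ ik.1 ik.2) = a := by
    rw [hsum1 (fun i k => g (ζ i k))]
    have h2 : ∀ i ∈ t, w i * ((1/(N:ℝ)) * ∑ k, g (ζ i k)) = w i * (z i).2 := by
      intro i hi
      rw [hzA i hi]
    rw [Finset.sum_congr rfl h2]
    have := congrArg Prod.snd hcm
    simpa [Prod.snd_sum] using this
  have hW2 : W2sq ((N : ℝ≥0∞)⁻¹ • ∑ k : Fin N, Measure.dirac (ξhat k)) Q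
      ≤ ENNReal.ofReal (ε ^ 2) := by
    refine le_trans (iInf_le_of_le Cpl (iInf_le_of_le ⟨hCplprob, hfst, hsnd⟩ le_rfl)) ?_
    rw [hCpl, mixM_lintegral]
    have h3 : ∀ ik ∈ S, ENNReal.ofReal (W ik)
        * ENNReal.ofReal (‖(ξhat ik.2, ζ ik.1 ik.2).1 - (ξhat ik.2, ζ ik.1 ik.2).2‖ ^ 2)
        = ENNReal.ofReal (W ik) * ENNReal.ofReal (‖ξhat ik.2 - ζ ik.1 ik.2‖ ^ 2) := by
      intro ik _; rfl
    rw [Finset.sum_congr rfl h3, hofsum _ (fun ik _ => by positivity), hcval]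
    exact ENNReal.ofReal_le_ofReal hc
  have hexpQ : expectEReal Q g = ((a : ℝ) : EReal) := by
    rw [hQ, mixM_expect S _ hW0 g]
    exact congrArg _ haval
  exact le_iSup₂_of_le Q ⟨⟨hQprob, hQsupp, hQmom⟩, hW2⟩ (le_of_eq hexpQ.symm)

lemma strong_dual {m N : ℕ} (hN : 0 < N)
    (Ξ : Set (Vec m)) (hΞclosed : IsClosed Ξ)
    (ξhat : Fin N → Vec m) (hξhat : ∀ k, ξhat k ∈ Ξ)
    (ε : ℝ) (hε : 0 < ε) (g : Vec m → ℝ) (hg : Continuous g) :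
    (⨅ lam ∈ {l : ℝ | 0 ≤ l}, ((lam * ε ^ 2 : ℝ) : EReal)
        + ((1 / (N : ℝ) : ℝ) : EReal) *
          ∑ k : Fin N, ⨆ ξ ∈ Ξ, ((g ξ - lam * ‖ξ - ξhat k‖ ^ 2 : ℝ) : EReal))
      ≤ ⨆ Q ∈ WassBall Ξ ((N : ℝ≥0∞)⁻¹ • ∑ k : Fin N, Measure.dirac (ξhat k)) ε,
          expectEReal Q g := by
  classical
  have hNR : (0:ℝ) < N := by exact_mod_cast hN
  set P := ⨆ Q ∈ WassBall Ξ ((N : ℝ≥0∞)⁻¹ • ∑ k : Fin N, Measure.dirac (ξhat k)) ε,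
      expectEReal Q g with hP
  by_cases hPtop : P = ⊤
  · rw [hPtop]; exact le_top
  set G : ℝ := (1/(N:ℝ)) * ∑ k, g (ξhat k) with hG
  have h0T : ((0:ℝ), G) ∈ Tset Ξ ξhat g := by
    refine ⟨ξhat, hξhat, ?_, rfl⟩
    simp
  have hGle : ((G : ℝ) : EReal) ≤ P :=
    realize hN Ξ hΞclosed ξhat hξhat ε hε g
      (subset_convexHull ℝ _ h0T) (by positivity)
  have hPbot : P ≠ ⊥ := fun h => (EReal.coe_ne_bot G) (le_bot_iff.1 (h ▸ hGle))
  set v : ℝ := P.toReal with hv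
  have hPv : P = ((v:ℝ) : EReal) := (EReal.coe_toReal hPtop hPbot).symm
  have hvhyp : ∀ p ∈ convexHull ℝ (Tset Ξ ξhat g), p.1 ≤ ε ^ 2 → p.2 ≤ v := by
    intro p hp hp1
    have h1 : ((p.2 : ℝ) : EReal) ≤ P :=
      realize hN Ξ hΞclosed ξhat hξhat ε hε g (by rw [Prod.mk.eta]; exact hp) hp1
    rw [hPv] at h1
    exact EReal.coe_le_coe_iff.1 h1
  obtain ⟨lam, hlam, hsep⟩ := plane_duality (by positivity) h0T hvhyp
  have htuple : ∀ ζ : Fin N → Vec m, (∀ k, ζ k ∈ Ξ) →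
      ∑ k, (g (ζ k) - lam * ‖ζ k - ξhat k‖ ^ 2) ≤ (N:ℝ) * (v - lam * ε ^ 2) := by
    intro ζ hζ
    have hmemT : ((1/(N:ℝ)) * ∑ k, ‖ζ k - ξhat k‖ ^ 2, (1/(N:ℝ)) * ∑ k, g (ζ k))
        ∈ Tset Ξ ξhat g := ⟨ζ, hζ, rfl, rfl⟩
    have hs := hsep _ hmemT
    simp only at hs
    have h2 : ∑ k, (g (ζ k) - lam * ‖ζ k - ξhat k‖ ^ 2)
        = ∑ k, g (ζ k) - lam * ∑ k, ‖ζ k - ξhat k‖ ^ 2 := by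
      rw [Finset.sum_sub_distrib, Finset.mul_sum]
    have e1 : (N:ℝ) * (1 / (N:ℝ) * ∑ k, g (ζ k)) = ∑ k, g (ζ k) := by field_simp
    have e2 : (N:ℝ) * (1 / (N:ℝ) * ∑ k, ‖ζ k - ξhat k‖ ^ 2)
        = ∑ k, ‖ζ k - ξhat k‖ ^ 2 := by field_simp
    have e3 := mul_le_mul_of_nonneg_left hs hNR.le
    rw [mul_sub, e1, mul_left_comm, e2] at e3
    rw [h2]
    linarith
  set sE : Fin N → EReal :=
    fun k => ⨆ ξ ∈ Ξ, ((g ξ - lam * ‖ξ - ξhat k‖ ^ 2 : ℝ) : EReal) with hsE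
  have hs_lb : ∀ k, ((g (ξhat k) : ℝ) : EReal) ≤ sE k := by
    intro k
    have h1 : ((g (ξhat k) - lam * ‖ξhat k - ξhat k‖ ^ 2 : ℝ) : EReal) ≤ sE k :=
      le_iSup₂_of_le (ξhat k) (hξhat k) le_rfl
    simpa using h1
  have hs_nb : ∀ k, sE k ≠ ⊥ := fun k hb =>
    (EReal.coe_ne_bot (g (ξhat k))) (le_bot_iff.1 (hb ▸ hs_lb k))
  have hstop : ∀ k, sE k ≠ ⊤ := by
    intro k₀ htop
    set R : ℝ := (N:ℝ) * (v - lam * ε ^ 2) - ∑ k, g (ξhat k) + |g (ξhat k₀)| + 1 with hR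
    obtain ⟨ξ, hξΞ, hξR⟩ :
        ∃ ξ ∈ Ξ, ((R:ℝ) : EReal) < ((g ξ - lam * ‖ξ - ξhat k₀‖ ^ 2 : ℝ) : EReal) := by
      by_contra hcon
      push_neg at hcon
      have h1 : sE k₀ ≤ ((R:ℝ) : EReal) := iSup₂_le fun ξ hξ => hcon ξ hξ
      rw [htop] at h1
      exact (EReal.coe_lt_top R).not_ge h1
    have hξR' : R < g ξ - lam * ‖ξ - ξhat k₀‖ ^ 2 := EReal.coe_lt_coe_iff.1 hξR
    have hupd := htuple (Function.update ξhat k₀ ξ) (fun k => by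
      by_cases hk : k = k₀
      · rw [hk, Function.update_self]; exact hξΞ
      · rw [Function.update_of_ne hk]; exact hξhat k)
    have hsplit : ∑ k, (g (Function.update ξhat k₀ ξ k)
          - lam * ‖Function.update ξhat k₀ ξ k - ξhat k‖ ^ 2)
        = (g ξ - lam * ‖ξ - ξhat k₀‖ ^ 2)
          + ∑ k ∈ Finset.univ.erase k₀, g (ξhat k) := by
      rw [← Finset.add_sum_erase _ _ (Finset.mem_univ k₀)]
      congr 1
      · rw [Function.update_self]
      · refine Finset.sum_congr rfl fun k hk => ?_
        rw [Function.update_of_ne (Finset.ne_of_mem_erase hk)]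
        simp
    have hSg : ∑ k, g (ξhat k)
        = g (ξhat k₀) + ∑ k ∈ Finset.univ.erase k₀, g (ξhat k) :=
      (Finset.add_sum_erase _ _ (Finset.mem_univ k₀)).symm
    rw [hsplit] at hupd
    have habs : g (ξhat k₀) ≤ |g (ξhat k₀)| := le_abs_self _
    linarith
  set sval : Fin N → ℝ := fun k => (sE k).toReal with hsvaldef
  have hsE_eq : ∀ k, sE k = ((sval k : ℝ) : EReal) :=
    fun k => (EReal.coe_toReal (hstop k) (hs_nb k)).symm
  have hsval_bound : (1/(N:ℝ)) * ∑ k, sval k ≤ v - lam * ε ^ 2 := by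
    refine le_of_forall_pos_le_add fun δ hδ => ?_
    have hsel : ∀ k, ∃ ξ, ξ ∈ Ξ ∧ sval k - δ < g ξ - lam * ‖ξ - ξhat k‖ ^ 2 := by
      intro k
      by_contra hcon
      push_neg at hcon
      have h1 : sE k ≤ ((sval k - δ : ℝ) : EReal) :=
        iSup₂_le fun ξ hξ => EReal.coe_le_coe_iff.2 (hcon ξ hξ)
      rw [hsE_eq k, EReal.coe_le_coe_iff] at h1
      linarith
    choose ζ hζΞ hζval using hsel
    have h2 := htuple ζ hζΞ
    have h3 : ∑ k, (sval k - δ) ≤ ∑ k, (g (ζ k) - lam * ‖ζ k - ξhat k‖ ^ 2) :=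
      Finset.sum_le_sum fun k _ => (hζval k).le
    rw [Finset.sum_sub_distrib, Finset.sum_const, Finset.card_univ, Fintype.card_fin,
      nsmul_eq_mul] at h3
    have h4 : ∑ k, sval k ≤ (N:ℝ) * (v - lam * ε ^ 2 + δ) := by nlinarith
    rw [one_div_mul_eq_div, div_le_iff₀ hNR]
    linarith [h4]
  have hRHS : ((lam * ε ^ 2 : ℝ) : EReal)
        + ((1 / (N : ℝ) : ℝ) : EReal) * ∑ k : Fin N, sE k
      = ((lam * ε ^ 2 + (1 / (N:ℝ)) * ∑ k, sval k : ℝ) : EReal) := by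
    have hsum : ∑ k : Fin N, sE k = ((∑ k, sval k : ℝ) : EReal) := by
      rw [ereal_coe_sum]
      exact Finset.sum_congr rfl fun k _ => hsE_eq k
    rw [hsum, ← EReal.coe_mul, ← EReal.coe_add]
  refine le_trans (iInf₂_le lam hlam) ?_
  rw [hPv]
  exact le_trans (le_of_eq hRHS) (EReal.coe_le_coe_iff.2 (by linarith))

lemma perx {m N : ℕ} (hN : 0 < N)
    (Ξ : Set (Vec m)) (hΞclosed : IsClosed Ξ)
    (ξhat : Fin N → Vec m) (hξhat : ∀ k, ξhat k ∈ Ξ)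
    (ε : ℝ) (hε : 0 < ε) (g : Vec m → ℝ) (hg : Continuous g) :
    (⨆ Q ∈ WassBall Ξ ((N : ℝ≥0∞)⁻¹ • ∑ k : Fin N, Measure.dirac (ξhat k)) ε,
        expectEReal Q g)
      = ⨅ lam ∈ {l : ℝ | 0 ≤ l}, ((lam * ε ^ 2 : ℝ) : EReal)
          + ((1 / (N : ℝ) : ℝ) : EReal) *
            ∑ k : Fin N, ⨆ ξ ∈ Ξ, ((g ξ - lam * ‖ξ - ξhat k‖ ^ 2 : ℝ) : EReal) := by
  refine le_antisymm ?_ (strong_dual hN Ξ hΞclosed ξhat hξhat ε hε g hg)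
  refine iSup₂_le fun Q hQ => le_iInf₂ fun lam hlam => ?_
  exact weak_dual hN Ξ hΞclosed ξhat hξhat ε hε g hg Q hQ lam hlam


/-- tractable reformulation of the data-driven distributionally robust
optimization problem over a 2-Wasserstein ambiguity ball centered at the empirical
distribution P̂_N = (1/N) Σ_k δ_{ξ̂ᵏ}, in the extended reals. -/
theorem wasserstein_dro_tractable_reformulation
    {n m N : ℕ} (hN : 0 < N)
    (f : Vec n → Vec m → ℝ) (hfcont : Continuous (Function.uncurry f))
    (X : Set (Vec n)) (hXclosed : IsClosed X) (hXconv : Convex ℝ X)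
    (Ξ : Set (Vec m)) (hΞclosed : IsClosed Ξ) (hΞconv : Convex ℝ Ξ)
    (hconv : ∀ ξ ∈ Ξ, ConvexOn ℝ Set.univ (fun x => f x ξ))
    (ξhat : Fin N → Vec m) (hξhat : ∀ k, ξhat k ∈ Ξ)
    (ε : ℝ) (hε : 0 < ε) :
    (⨅ x ∈ X,
        ⨆ Q ∈ WassBall Ξ ((N : ℝ≥0∞)⁻¹ • ∑ k : Fin N, Measure.dirac (ξhat k)) ε,
          expectEReal Q (f x))
      = ⨅ lam ∈ {l : ℝ | 0 ≤ l}, ⨅ x ∈ X,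
          ((lam * ε ^ 2 : ℝ) : EReal)
            + ((1 / (N : ℝ) : ℝ) : EReal) *
              ∑ k : Fin N, ⨆ ξ ∈ Ξ, ((f x ξ - lam * ‖ξ - ξhat k‖ ^ 2 : ℝ) : EReal) := by
  have hstep : ∀ x : Vec n,
      (⨆ Q ∈ WassBall Ξ ((N : ℝ≥0∞)⁻¹ • ∑ k : Fin N, Measure.dirac (ξhat k)) ε,
          expectEReal Q (f x))
        = ⨅ lam ∈ {l : ℝ | 0 ≤ l}, ((lam * ε ^ 2 : ℝ) : EReal)
            + ((1 / (N : ℝ) : ℝ) : EReal) *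
              ∑ k : Fin N, ⨆ ξ ∈ Ξ, ((f x ξ - lam * ‖ξ - ξhat k‖ ^ 2 : ℝ) : EReal) := by
    intro x
    exact perx hN Ξ hΞclosed ξhat hξhat ε hε (f x) (hfcont.comp (Continuous.prodMk_right x))
  calc (⨅ x ∈ X,
        ⨆ Q ∈ WassBall Ξ ((N : ℝ≥0∞)⁻¹ • ∑ k : Fin N, Measure.dirac (ξhat k)) ε,
          expectEReal Q (f x))
      = ⨅ x ∈ X, ⨅ lam ∈ {l : ℝ | 0 ≤ l},
          ((lam * ε ^ 2 : ℝ) : EReal)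
            + ((1 / (N : ℝ) : ℝ) : EReal) *
              ∑ k : Fin N, ⨆ ξ ∈ Ξ, ((f x ξ - lam * ‖ξ - ξhat k‖ ^ 2 : ℝ) : EReal) := by
        exact iInf_congr fun x => iInf_congr fun _ => hstep x
    _ = ⨅ lam ∈ {l : ℝ | 0 ≤ l}, ⨅ x ∈ X,
          ((lam * ε ^ 2 : ℝ) : EReal)
            + ((1 / (N : ℝ) : ℝ) : EReal) *
              ∑ k : Fin N, ⨆ ξ ∈ Ξ, ((f x ξ - lam * ‖ξ - ξhat k‖ ^ 2 : ℝ) : EReal) := by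
        refine le_antisymm ?_ ?_
        · exact le_iInf₂ fun lam hlam => le_iInf₂ fun x hx =>
            iInf₂_le_of_le x hx (iInf₂_le lam hlam)
        · exact le_iInf₂ fun x hx => le_iInf₂ fun lam hlam =>
            iInf₂_le_of_le lam hlam (iInf₂_le x hx)

end
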